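/- Let L = (e_1, …, e_N) be a list of non-negative integers with N ≥ 2 and e_1 ≥ 1, and let C_n (n ≥ 0) be as in the context. Then, in the ring of formal power series over the integers, (Σ_{n=0}^{∞} C_n X^n) · (1 − Σ_{k=1}^{N−1} e_k X^k − (1 + e_N) X^N) = 1 − X^N; equivalently, the power series Σ_n C_n x^n converges on a neighborhood of 0 and equals (1 − x^N)/f(x) there, where f(x) = 1 − Σ_{k=1}^{N−1} e_k x^k − (1 + e_N) x^N. -/

import Mathlib

open Filter Topology

namespace Zeck

-- A coefficient function is `μ : ℕ → ℕ`; index `0` is unused (members vanish there).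

/-- The maximal L-block `θ^n` at index `n-1`, for `L = (e 1, …, e N)`. -/
def maxBlock (N : ℕ) (e : ℕ → ℕ) (n : ℕ) : ℕ → ℕ :=
  fun k => if 1 ≤ k ∧ k < n then e ((n - k - 1) % N + 1) else 0

/-- A proper L-block at index `n-1` with support interval `[a, n-1]`. -/
def IsProperBlock (N : ℕ) (e : ℕ → ℕ) (ζ : ℕ → ℕ) (a n : ℕ) : Prop :=
  2 ≤ n ∧ 1 ≤ a ∧ a ≤ n - 1 ∧ (∀ j, a < j → ζ j = maxBlock N e n j) ∧
    ζ a < maxBlock N e n a ∧ (∀ j, j < a → ζ j = 0)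

/-- An L-block (proper or maximal), together with its support interval. -/
def IsBlock (N : ℕ) (e : ℕ → ℕ) (ζ : ℕ → ℕ) (I : Finset ℕ) : Prop :=
  ∃ n, 2 ≤ n ∧ ((ζ = maxBlock N e n ∧ I = Finset.Icc 1 (n - 1)) ∨
    (∃ a, IsProperBlock N e ζ a n ∧ I = Finset.Icc a (n - 1)))

/-- Membership in the periodic Zeckendorf collection for positive integers determined by L:
finite sums of L-blocks with pairwise disjoint support intervals (the zero function has `l = 0`). -/
def memColl (N : ℕ) (e : ℕ → ℕ) (μ : ℕ → ℕ) : Prop :=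
  ∃ (l : ℕ) (ζ : ℕ → ℕ → ℕ) (I : ℕ → Finset ℕ),
    (∀ i, i < l → IsBlock N e (ζ i) (I i)) ∧
    (∀ i j, i < l → j < l → i ≠ j → Disjoint (I i) (I j)) ∧
    ∀ k, μ k = ∑ i ∈ Finset.range l, ζ i k

/-- The maximal L*-block `β̄^n` at index `n`. -/
def maxStarBlock (N : ℕ) (e : ℕ → ℕ) (n : ℕ) : ℕ → ℕ :=
  fun k => if n ≤ k then e ((k - n) % N + 1) else 0

/-- A proper L*-block at index `n` with support interval `[n, b]`. -/
def IsProperStarBlock (N : ℕ) (e : ℕ → ℕ) (ζ : ℕ → ℕ) (n b : ℕ) : Prop :=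
  1 ≤ n ∧ n ≤ b ∧ (∀ j, j < b → ζ j = maxStarBlock N e n j) ∧
    ζ b < maxStarBlock N e n b ∧ (∀ j, b < j → ζ j = 0)

/-- Membership in the periodic Zeckendorf collection for `(0,1)` determined by L:
nonzero finite or infinite sums of proper L*-blocks with pairwise disjoint support intervals. -/
def memStar (N : ℕ) (e : ℕ → ℕ) (ε : ℕ → ℕ) : Prop :=
  ε ≠ 0 ∧ ∃ (l : ℕ∞) (ζ : ℕ → ℕ → ℕ) (nb : ℕ → ℕ × ℕ),
    (∀ i : ℕ, (i : ℕ∞) < l → IsProperStarBlock N e (ζ i) (nb i).1 (nb i).2) ∧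
    (∀ i j : ℕ, (i : ℕ∞) < l → (j : ℕ∞) < l → i ≠ j →
      Disjoint (Finset.Icc (nb i).1 (nb i).2) (Finset.Icc (nb j).1 (nb j).2)) ∧
    ∀ k, ε k = ∑' i : ℕ, if (i : ℕ∞) < l then ζ i k else 0

/-- A decomposition `ε = ζ^1 + … + ζ^l + μ` in which the `ζ^i` are proper L*-blocks whose
support intervals partition `[1, b]` and `μ` vanishes on `[0, b]` (`l, b` possibly infinite). -/
def DecompData (N : ℕ) (e : ℕ → ℕ) (ε : ℕ → ℕ) (l : ℕ∞) (ζ : ℕ → ℕ → ℕ)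
    (nb : ℕ → ℕ × ℕ) (b : ℕ∞) (μ : ℕ → ℕ) : Prop :=
  (∀ i : ℕ, (i : ℕ∞) < l → IsProperStarBlock N e (ζ i) (nb i).1 (nb i).2) ∧
  (∀ i j : ℕ, (i : ℕ∞) < l → (j : ℕ∞) < l → i ≠ j →
    Disjoint (Set.Icc (nb i).1 (nb i).2) (Set.Icc (nb j).1 (nb j).2)) ∧
  (⋃ i ∈ {i : ℕ | (i : ℕ∞) < l}, Set.Icc (nb i).1 (nb i).2) = {k : ℕ | 1 ≤ k ∧ (k : ℕ∞) ≤ b} ∧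
  (∀ k : ℕ, (k : ℕ∞) ≤ b → μ k = 0) ∧
  (∀ k, ε k = (∑' i : ℕ, if (i : ℕ∞) < l then ζ i k else 0) + μ k)

/-- Membership in `E̅*`. -/
def memEBar (N : ℕ) (e : ℕ → ℕ) (ε : ℕ → ℕ) : Prop :=
  memStar N e ε ∨
  ∃ (l : ℕ) (ζ : ℕ → ℕ → ℕ) (nb : ℕ → ℕ × ℕ) (b : ℕ),
    DecompData N e ε (l : ℕ∞) ζ nb (b : ℕ∞) (maxStarBlock N e (b + 1))

/-- Descending lexicographic order. -/
def dLT (a b : ℕ → ℕ) : Prop := ∃ k, a k < b k ∧ ∀ j, j < k → a j = b j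

def dLE (a b : ℕ → ℕ) : Prop := a = b ∨ dLT a b

/-- Ascending lexicographic order (on finitely supported functions). -/
def aLT (a b : ℕ → ℕ) : Prop := ∃ k, a k < b k ∧ ∀ j, k < j → a j = b j

/-- The basis coefficient function `β^b`. -/
def betaUnit (b : ℕ) : ℕ → ℕ := fun k => if k = b then 1 else 0

/-- The relation `η = rev̄(ε)`. -/
def RevBar (N : ℕ) (e : ℕ → ℕ) (ε η : ℕ → ℕ) : Prop :=
  (dLE (maxStarBlock N e 1) ε ∧ η = maxStarBlock N e 1) ∨
  (dLT ε (maxStarBlock N e 1) ∧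
    ((memStar N e ε ∧ η = ε) ∨
     ∃ (l : ℕ) (ζ : ℕ → ℕ → ℕ) (nb : ℕ → ℕ × ℕ) (b : ℕ) (μ : ℕ → ℕ),
       DecompData N e ε (l : ℕ∞) ζ nb (b : ℕ∞) μ ∧
       ((dLT (maxStarBlock N e (b + 1)) μ ∧
           η = fun k => (∑ i ∈ Finset.range l, ζ i k) + betaUnit b k) ∨
        (μ = maxStarBlock N e (b + 1) ∧ η = ε))))

/-- `Σ_k ε_k w^k` as a real number. -/
noncomputable def evalReal (ε : ℕ → ℕ) (w : ℝ) : ℝ := ∑' k : ℕ, (ε k : ℝ) * w ^ k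

/-- `Σ_k ε_k H_k` (finitely supported `ε`). -/
noncomputable def evalNat (ε H : ℕ → ℕ) : ℕ := ∑' k : ℕ, ε k * H k

/-- The counting function `z`. -/
noncomputable def zfun (N : ℕ) (e : ℕ → ℕ) (Ht : ℕ → ℕ) (x : ℕ) : ℕ :=
  Set.ncard {m : ℕ | m < x ∧ ∃ ε, memColl N e ε ∧ m = evalNat ε Ht}

/-- Characteristic polynomial of `L` for positive integers. -/
noncomputable def fchar (N : ℕ) (e : ℕ → ℕ) (x : ℝ) : ℝ :=
  x ^ N - (∑ k ∈ Finset.Ico 1 N, (e k : ℝ) * x ^ (N - k)) - (1 + (e N : ℝ))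

/-- Characteristic polynomial of `L` for `(0,1)`. -/
noncomputable def gchar (N : ℕ) (e : ℕ → ℕ) (x : ℝ) : ℝ :=
  -1 + (∑ k ∈ Finset.Ico 1 N, (e k : ℝ) * x ^ k) + (1 + (e N : ℝ)) * x ^ N

end Zeck

open Zeck

/-- Tuples of proper `L*`-blocks (with their support intervals) whose support intervals
partition `[1, n]`, listed in increasing order of their intervals. -/
def Zeck.decompTuples (N : ℕ) (e : ℕ → ℕ) (n : ℕ) : Set (List ((ℕ → ℕ) × ℕ × ℕ)) :=
  {l | (∀ p ∈ l, IsProperStarBlock N e p.1 p.2.1 p.2.2) ∧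
    List.Chain' (fun p q => q.2.1 = p.2.2 + 1) l ∧
    (l.head?.map (fun p => p.2.1) = some 1) ∧
    (l.getLast?.map (fun p => p.2.2) = some n)}


namespace ZeckAux
open Zeck


def blkE (N : ℕ) (e : ℕ → ℕ) (m : ℕ) : ℕ := e ((m - 1) % N + 1)

def gcount (N : ℕ) (e : ℕ → ℕ) : ℕ → ℕ
  | 0 => 1
  | n + 1 => ∑ j ∈ (Finset.range (n+1)).attach,
      blkE N e (j.1 + 1) * gcount N e (n - j.1)
  decreasing_by
    have := Finset.mem_range.mp j.2; omega

lemma gcount_zero (N : ℕ) (e : ℕ → ℕ) : gcount N e 0 = 1 := by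
  rw [gcount]

lemma gcount_succ (N : ℕ) (e : ℕ → ℕ) (n : ℕ) :
    gcount N e (n+1) = ∑ j ∈ Finset.range (n+1), blkE N e (j+1) * gcount N e (n - j) := by
  rw [gcount, ← Finset.sum_attach (Finset.range (n+1)) (fun j => blkE N e (j+1) * gcount N e (n-j))]

def mkBlock (N : ℕ) (e : ℕ → ℕ) (a b v : ℕ) : ℕ → ℕ :=
  fun j => if j < b then maxStarBlock N e a j else if j = b then v else 0

def blockSet (N : ℕ) (e : ℕ → ℕ) (a b : ℕ) : Set (ℕ → ℕ) :=
  {ζ | IsProperStarBlock N e ζ a b}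

lemma maxStarBlock_eq_blkE (N : ℕ) (e : ℕ → ℕ) {a b : ℕ} (hab : a ≤ b) :
    maxStarBlock N e a b = blkE N e (b + 1 - a) := by
  have h : b + 1 - a - 1 = b - a := by omega
  simp only [maxStarBlock, blkE, if_pos hab, h]

lemma block_eq_mkBlock {N : ℕ} {e : ℕ → ℕ} {ζ : ℕ → ℕ} {a b : ℕ}
    (h : IsProperStarBlock N e ζ a b) : ζ = mkBlock N e a b (ζ b) := by
  obtain ⟨h1, hab, hlt, hb, hgt⟩ := h
  funext j
  rcases lt_trichotomy j b with hj | hj | hj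
  · simp [mkBlock, hj, hlt j hj]
  · simp [mkBlock, hj]
  · simp [mkBlock, Nat.lt_asymm hj, Nat.ne_of_gt hj, hgt j hj]

lemma isProperStarBlock_mkBlock {N : ℕ} {e : ℕ → ℕ} {a b v : ℕ}
    (h1 : 1 ≤ a) (hab : a ≤ b) (hv : v < blkE N e (b + 1 - a)) :
    IsProperStarBlock N e (mkBlock N e a b v) a b := by
  refine ⟨h1, hab, fun j hj => by simp [mkBlock, hj], ?_, fun j hj => ?_⟩
  · simp only [mkBlock, lt_irrefl, if_false, if_pos rfl, if_neg (lt_irrefl b)]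
    rwa [maxStarBlock_eq_blkE N e hab]
  · simp [mkBlock, Nat.lt_asymm hj, Nat.ne_of_gt hj]

noncomputable def blockEquiv (N : ℕ) (e : ℕ → ℕ) (a b : ℕ) (h1 : 1 ≤ a) (hab : a ≤ b) :
    blockSet N e a b ≃ Fin (blkE N e (b + 1 - a)) where
  toFun ζ := ⟨ζ.1 b, by
    have h := ζ.2
    have := h.2.2.2.1
    rwa [maxStarBlock_eq_blkE N e hab] at this⟩
  invFun v := ⟨mkBlock N e a b v.1, isProperStarBlock_mkBlock h1 hab v.2⟩
  left_inv ζ := by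
    ext1
    exact (block_eq_mkBlock ζ.2).symm
  right_inv v := by
    ext
    simp [mkBlock]

lemma ncard_blockSet (N : ℕ) (e : ℕ → ℕ) {a b : ℕ} (h1 : 1 ≤ a) (hab : a ≤ b) :
    (blockSet N e a b).ncard = blkE N e (b + 1 - a) := by
  rw [← Nat.card_coe_set_eq, Nat.card_congr (blockEquiv N e a b h1 hab), Nat.card_eq_fintype_card,
    Fintype.card_fin]

lemma finite_blockSet (N : ℕ) (e : ℕ → ℕ) {a b : ℕ} (h1 : 1 ≤ a) (hab : a ≤ b) :
    (blockSet N e a b).Finite := by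
  have : Finite ↥(blockSet N e a b) := Finite.of_equiv _ (blockEquiv N e a b h1 hab).symm
  exact Set.finite_coe_iff.mp this




def Tuples (N : ℕ) (e : ℕ → ℕ) (a n : ℕ) : Set (List ((ℕ → ℕ) × ℕ × ℕ)) :=
  {l | (∀ p ∈ l, IsProperStarBlock N e p.1 p.2.1 p.2.2) ∧
    List.Chain' (fun p q => q.2.1 = p.2.2 + 1) l ∧
    (l.head?.map (fun p => p.2.1) = some a) ∧
    (l.getLast?.map (fun p => p.2.2) = some n)}

lemma tuples_cons_iff {N : ℕ} {e : ℕ → ℕ} {a n : ℕ} {p : (ℕ → ℕ) × ℕ × ℕ}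
    {t : List ((ℕ → ℕ) × ℕ × ℕ)} :
    (p :: t) ∈ Tuples N e a n ↔
      IsProperStarBlock N e p.1 p.2.1 p.2.2 ∧ p.2.1 = a ∧
      ((t = [] ∧ p.2.2 = n) ∨ t ∈ Tuples N e (p.2.2 + 1) n) := by
  constructor
  · rintro ⟨hmem, hch, hhd, hlast⟩
    refine ⟨hmem p (List.mem_cons_self), by simpa using hhd, ?_⟩
    cases t with
    | nil => left; exact ⟨rfl, by simpa using hlast⟩
    | cons q t' =>
      right
      simp only [List.Chain', List.isChain_cons_cons] at hch
      refine ⟨fun r hr => hmem r (List.mem_cons_of_mem _ hr), hch.2, ?_, ?_⟩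
      · simp [hch.1]
      · rwa [List.getLast?_cons_cons] at hlast
  · rintro ⟨hp, ha, (⟨rfl, hn⟩ | ht)⟩
    · exact ⟨by simpa using hp, List.isChain_singleton _, by simp [ha], by simp [hn]⟩
    · obtain ⟨hmem, hch, hhd, hlast⟩ := ht
      cases t with
      | nil => simp at hhd
      | cons q t' =>
        refine ⟨?_, ?_, by simp [ha], by rwa [List.getLast?_cons_cons]⟩
        · intro r hr
          rcases List.mem_cons.mp hr with rfl | hr
          · exact hp
          · exact hmem r hr
        · simp only [List.Chain', List.isChain_cons_cons]
          have : q.2.1 = p.2.2 + 1 := by simpa using hhd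
          exact ⟨this, hch⟩

lemma nil_not_mem_tuples {N : ℕ} {e : ℕ → ℕ} {a n : ℕ} :
    ([] : List ((ℕ → ℕ) × ℕ × ℕ)) ∉ Tuples N e a n := by
  rintro ⟨-, -, hhd, -⟩; simp at hhd

lemma end_le_of_mem_tuples {N : ℕ} {e : ℕ → ℕ} :
    ∀ (t : List ((ℕ → ℕ) × ℕ × ℕ)) (p : (ℕ → ℕ) × ℕ × ℕ) (a n : ℕ),
    (p :: t) ∈ Tuples N e a n → p.2.2 ≤ n := by
  intro t
  induction t with
  | nil =>
    intro p a n h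
    rcases (tuples_cons_iff.mp h).2.2 with ⟨-, rfl⟩ | h'
    · exact le_rfl
    · exact absurd h' nil_not_mem_tuples
  | cons q t' ih =>
    intro p a n h
    rcases (tuples_cons_iff.mp h).2.2 with ⟨h', -⟩ | h'
    · simp at h'
    · have hq := ih q (p.2.2 + 1) n h'
      have hblk := (tuples_cons_iff.mp h').1
      have := (tuples_cons_iff.mp h').2.1
      have : p.2.2 + 1 ≤ q.2.2 := this ▸ hblk.2.1
      omega

lemma tuples_empty_of_lt {N : ℕ} {e : ℕ → ℕ} {a n : ℕ} (h : n < a) :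
    Tuples N e a n = ∅ := by
  ext l
  simp only [Set.mem_empty_iff_false, iff_false]
  intro hl
  cases l with
  | nil => exact nil_not_mem_tuples hl
  | cons p t =>
    have h1 := tuples_cons_iff.mp hl
    have h2 := end_le_of_mem_tuples t p a n hl
    have := h1.1.2.1
    omega


lemma ncard_prod_set {α β : Type*} (s : Set α) (t : Set β) :
    (s ×ˢ t).ncard = s.ncard * t.ncard := by
  rw [← Nat.card_coe_set_eq, ← Nat.card_coe_set_eq, ← Nat.card_coe_set_eq,
    Nat.card_congr (Equiv.Set.prod s t), Nat.card_prod]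

lemma ncard_biUnion_finset {ι α : Type*} (s : Finset ι) (t : ι → Set α)
    (hf : ∀ i ∈ s, (t i).Finite)
    (hd : ∀ i ∈ s, ∀ j ∈ s, i ≠ j → Disjoint (t i) (t j)) :
    (⋃ i ∈ s, t i).Finite ∧ (⋃ i ∈ s, t i).ncard = ∑ i ∈ s, (t i).ncard := by
  classical
  induction s using Finset.induction_on with
  | empty => simp
  | @insert i s his ih =>
    have hf' : ∀ j ∈ s, (t j).Finite := fun j hj => hf j (Finset.mem_insert_of_mem hj)
    have hd' : ∀ a ∈ s, ∀ b ∈ s, a ≠ b → Disjoint (t a) (t b) :=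
      fun a ha b hb hab => hd a (Finset.mem_insert_of_mem ha) b (Finset.mem_insert_of_mem hb) hab
    obtain ⟨ihf, ihc⟩ := ih hf' hd'
    have hdisj : Disjoint (t i) (⋃ j ∈ s, t j) := by
      rw [Set.disjoint_iff_forall_ne]
      rintro x hx y hy rfl
      simp only [Set.mem_iUnion] at hy
      obtain ⟨j, hj, hyj⟩ := hy
      exact (hd i (Finset.mem_insert_self i s) j (Finset.mem_insert_of_mem hj)
        (fun h => his (h ▸ hj))).ne_of_mem hx hyj rfl
    have hfi := hf i (Finset.mem_insert_self i s)
    constructor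
    · rw [Finset.set_biUnion_insert]
      exact hfi.union ihf
    · rw [Finset.set_biUnion_insert, Set.ncard_union_eq hdisj hfi ihf, ihc,
        Finset.sum_insert his]

def Sb (N : ℕ) (e : ℕ → ℕ) (a n b : ℕ) : Set (List ((ℕ → ℕ) × ℕ × ℕ)) :=
  {l ∈ Tuples N e a n | l.head?.map (fun p => p.2.2) = some b}

lemma tuples_eq_biUnion_Sb {N : ℕ} {e : ℕ → ℕ} (a n : ℕ) :
    Tuples N e a n = ⋃ b ∈ Finset.Icc a n, Sb N e a n b := by
  ext l
  simp only [Set.mem_iUnion, Finset.mem_Icc, exists_prop]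
  constructor
  · intro hl
    cases l with
    | nil => exact absurd hl nil_not_mem_tuples
    | cons p t =>
      refine ⟨p.2.2, ⟨?_, end_le_of_mem_tuples t p a n hl⟩, hl, by simp⟩
      have h := tuples_cons_iff.mp hl
      have := h.1.2.1
      omega
  · rintro ⟨b, -, hl, -⟩
    exact hl

lemma Sb_last {N : ℕ} {e : ℕ → ℕ} {a n : ℕ} :
    Sb N e a n n = (fun ζ => [(ζ, (a, n))]) '' blockSet N e a n := by
  ext l
  constructor
  · rintro ⟨hl, hhd⟩
    cases l with
    | nil => exact absurd hl nil_not_mem_tuples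
    | cons p t =>
      obtain ⟨hp, ha, hdisj⟩ := tuples_cons_iff.mp hl
      have hb : p.2.2 = n := by simpa using hhd
      rcases hdisj with ⟨rfl, -⟩ | ht
      · refine ⟨p.1, by rw [← ha, ← hb]; exact hp, ?_⟩
        simp only [List.cons.injEq, and_true]
        ext <;> simp [ha, hb]
      · rw [hb, tuples_empty_of_lt (Nat.lt_succ_self n)] at ht
        exact absurd ht (Set.notMem_empty _)
  · rintro ⟨ζ, hζ, rfl⟩
    have hζ' : IsProperStarBlock N e ζ a n := hζ
    exact ⟨tuples_cons_iff.mpr ⟨hζ', rfl, Or.inl ⟨rfl, rfl⟩⟩, by simp⟩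

lemma Sb_mid {N : ℕ} {e : ℕ → ℕ} {a n b : ℕ} (hbn : b < n) :
    Sb N e a n b =
      (fun q : (ℕ → ℕ) × List ((ℕ → ℕ) × ℕ × ℕ) => (q.1, (a, b)) :: q.2) ''
        (blockSet N e a b ×ˢ Tuples N e (b + 1) n) := by
  ext l
  constructor
  · rintro ⟨hl, hhd⟩
    cases l with
    | nil => exact absurd hl nil_not_mem_tuples
    | cons p t =>
      obtain ⟨hp, ha, hdisj⟩ := tuples_cons_iff.mp hl
      have hb : p.2.2 = b := by simpa using hhd
      rcases hdisj with ⟨rfl, hn⟩ | ht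
      · omega
      · refine ⟨(p.1, t), ⟨by rw [← ha, ← hb]; exact hp, by rwa [hb] at ht⟩, ?_⟩
        simp only [List.cons.injEq, and_true]
        ext <;> simp [ha, hb]
  · rintro ⟨⟨ζ, t⟩, ⟨hζ, ht⟩, rfl⟩
    have hζ' : IsProperStarBlock N e ζ a b := hζ
    exact ⟨tuples_cons_iff.mpr ⟨hζ', rfl, Or.inr ht⟩, by simp⟩

lemma tuples_finite_card (N : ℕ) (e : ℕ → ℕ) :
    ∀ m a n : ℕ, 1 ≤ a → n = a + m →
      (Tuples N e a n).Finite ∧ (Tuples N e a n).ncard = gcount N e (m + 1) := by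
  intro m
  induction m using Nat.strong_induction_on with
  | _ m IH =>
    intro a n ha hn
    have key : ∀ b ∈ Finset.Icc a n,
        (Sb N e a n b).Finite ∧
          (Sb N e a n b).ncard = blkE N e (b + 1 - a) * gcount N e (n - b) := by
      intro b hb
      rw [Finset.mem_Icc] at hb
      rcases eq_or_lt_of_le hb.2 with rfl | hbn
      · rw [Sb_last]
        have hinj : Function.Injective (fun ζ : ℕ → ℕ => [(ζ, (a, b))]) := by
          intro x y h
          simpa using h
        refine ⟨(finite_blockSet N e ha hb.1).image _, ?_⟩
        rw [Set.ncard_image_of_injective _ hinj, ncard_blockSet N e ha hb.1,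
          Nat.sub_self, gcount_zero, mul_one]
      · have hm' : n - (b + 1) < m := by omega
        obtain ⟨hfin', hcard'⟩ := IH (n - (b+1)) hm' (b+1) n (by omega) (by omega)
        rw [Sb_mid hbn]
        have hinj : Function.Injective
            (fun q : (ℕ → ℕ) × List ((ℕ → ℕ) × ℕ × ℕ) => (q.1, (a, b)) :: q.2) := by
          rintro ⟨x1, x2⟩ ⟨y1, y2⟩ h
          simpa using h
        refine ⟨((finite_blockSet N e ha hb.1).prod hfin').image _, ?_⟩
        rw [Set.ncard_image_of_injective _ hinj, ncard_prod_set,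
          ncard_blockSet N e ha hb.1, hcard']
        congr 2
        omega
    have hdisj : ∀ b ∈ Finset.Icc a n, ∀ b' ∈ Finset.Icc a n, b ≠ b' →
        Disjoint (Sb N e a n b) (Sb N e a n b') := by
      intro b _ b' _ hne
      rw [Set.disjoint_iff_forall_ne]
      rintro l ⟨-, hl⟩ l' ⟨-, hl'⟩ rfl
      rw [hl] at hl'
      exact hne (by simpa using hl')
    obtain ⟨hfin, hcard⟩ := ncard_biUnion_finset (Finset.Icc a n) _
      (fun b hb => (key b hb).1) hdisj
    rw [tuples_eq_biUnion_Sb a n]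
    refine ⟨hfin, ?_⟩
    rw [hcard, Finset.sum_congr rfl (fun b hb => (key b hb).2)]
    subst hn
    rw [gcount_succ]
    refine Finset.sum_nbij' (fun b => b - a) (fun j => a + j) ?_ ?_ ?_ ?_ ?_
    · intro b hb; rw [Finset.mem_Icc] at hb; rw [Finset.mem_range]; omega
    · intro j hj; rw [Finset.mem_range] at hj; rw [Finset.mem_Icc]; omega
    · intro b hb; rw [Finset.mem_Icc] at hb; omega
    · intro j hj; rw [Finset.mem_range] at hj; omega
    · intro b hb
      rw [Finset.mem_Icc] at hb
      have h1 : b + 1 - a = (b - a) + 1 := by omega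
      have h2 : a + m - b = m - (b - a) := by omega
      rw [h1, h2]

variable (N : ℕ) (e : ℕ → ℕ)


variable (N : ℕ) (e : ℕ → ℕ)

noncomputable def Pser (c : ℕ → ℕ) : PowerSeries ℤ := PowerSeries.mk fun n => (c n : ℤ)

noncomputable def Qser : PowerSeries ℤ :=
  PowerSeries.mk fun m => if m = 0 then 0 else (blkE N e m : ℤ)

noncomputable def Gser : PowerSeries ℤ :=
  1 - (∑ k ∈ Finset.Ico 1 N, PowerSeries.C (R := ℤ) (e k : ℤ) * PowerSeries.X ^ k)
    - PowerSeries.C (R := ℤ) (1 + (e N : ℤ)) * PowerSeries.X ^ N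

lemma lemma1 (c : ℕ → ℕ) (hc0 : c 0 = 1)
    (hrec : ∀ n, c (n+1) = ∑ j ∈ Finset.range (n+1), blkE N e (j+1) * c (n - j)) :
    Pser c * (1 - Qser N e) = 1 := by
  ext n
  rw [mul_sub, mul_one, map_sub, PowerSeries.coeff_mul]
  rw [Finset.Nat.sum_antidiagonal_eq_sum_range_succ_mk]
  cases n with
  | zero => simp [Pser, Qser, hc0]
  | succ n =>
    rw [Finset.sum_range_succ]
    simp only [Pser, Qser, PowerSeries.coeff_mk, Nat.sub_self, if_pos rfl, mul_zero, add_zero,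
      PowerSeries.coeff_one, Nat.succ_ne_zero, if_false]
    have h1 : ∀ k ∈ Finset.range (n+1),
        (c k : ℤ) * (if n + 1 - k = 0 then 0 else (blkE N e (n+1-k) : ℤ))
          = (c k : ℤ) * (blkE N e (n+1-k) : ℤ) := by
      intro k hk
      rw [Finset.mem_range] at hk
      rw [if_neg (by omega)]
    rw [Finset.sum_congr rfl h1]
    have h2 : (∑ k ∈ Finset.range (n+1), (c k : ℤ) * (blkE N e (n+1-k) : ℤ))
        = ∑ j ∈ Finset.range (n+1), (blkE N e (j+1) : ℤ) * (c (n - j) : ℤ) := by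
      rw [← Finset.sum_range_reflect]
      refine Finset.sum_congr rfl fun j hj => ?_
      rw [Finset.mem_range] at hj
      have hb : n + 1 - 1 - j = n - j := by omega
      have ha : n + 1 - (n - j) = j + 1 := by omega
      rw [hb, ha, mul_comm]
    rw [h2]
    have := hrec n
    push_cast [this]
    ring

lemma lemma2 (hN : 2 ≤ N) :
    (1 - PowerSeries.X ^ N) * (1 - Qser N e) = Gser N e := by
  have hsm : ∀ k, 1 ≤ k → k ≤ N → blkE N e k = e k := by
    intro k h1 h2
    unfold blkE
    rw [Nat.mod_eq_of_lt (by omega)]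
    congr 1
    omega
  have hmd : ∀ k, N + 1 ≤ k → blkE N e k = blkE N e (k - N) := by
    intro k hk
    unfold blkE
    rw [Nat.mod_eq_sub_mod (by omega : N ≤ k - 1), show k - 1 - N = k - N - 1 from by omega]
  have key : Qser N e - PowerSeries.X ^ N * Qser N e
      = ∑ k ∈ Finset.Ico 1 (N+1), PowerSeries.C (R := ℤ) (e k : ℤ) * PowerSeries.X ^ k := by
    ext n
    rw [map_sub, PowerSeries.coeff_mul, Finset.Nat.sum_antidiagonal_eq_sum_range_succ_mk]
    have hXQ : (∑ k ∈ Finset.range (n+1),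
        PowerSeries.coeff (R := ℤ) k (PowerSeries.X ^ N) * PowerSeries.coeff (R := ℤ) (n - k) (Qser N e))
        = if N ∈ Finset.range (n+1) then PowerSeries.coeff (R := ℤ) (n - N) (Qser N e) else 0 := by
      rw [← Finset.sum_ite_eq' (Finset.range (n+1)) N
        (fun k => PowerSeries.coeff (R := ℤ) (n - k) (Qser N e))]
      refine Finset.sum_congr rfl fun k _ => ?_
      rw [PowerSeries.coeff_X_pow]
      split_ifs with h
      · rw [one_mul]
      · rw [zero_mul]
    have hR : PowerSeries.coeff (R := ℤ) n
        (∑ k ∈ Finset.Ico 1 (N+1), PowerSeries.C (R := ℤ) (e k : ℤ) * PowerSeries.X ^ k)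
        = if n ∈ Finset.Ico 1 (N+1) then (e n : ℤ) else 0 := by
      rw [map_sum, ← Finset.sum_ite_eq (Finset.Ico 1 (N+1)) n (fun k => (e k : ℤ))]
      refine Finset.sum_congr rfl fun k _ => ?_
      rw [PowerSeries.coeff_C_mul, PowerSeries.coeff_X_pow]
      split_ifs with h
      · rw [mul_one]
      · rw [mul_zero]
    rw [hXQ, hR]
    simp only [Qser, PowerSeries.coeff_mk, Finset.mem_range, Finset.mem_Ico]
    by_cases hn0 : n = 0
    · subst hn0
      rw [if_pos rfl, if_neg (by omega), if_neg (by omega), sub_zero]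
    · rw [if_neg hn0]
      by_cases hnN : n ≤ N
      · rw [hsm n (by omega) hnN]
        by_cases hNn : N < n + 1
        · have hnn : n = N := by omega
          rw [if_pos hNn, hnn, Nat.sub_self, if_pos rfl, sub_zero,
            if_pos (show 1 ≤ N ∧ N < N + 1 by omega)]
        · rw [if_neg hNn, sub_zero, if_pos (show 1 ≤ n ∧ n < N + 1 by omega)]
      · rw [if_pos (show N < n + 1 by omega), if_neg (show ¬(n - N = 0) by omega),
          hmd n (by omega), sub_self, if_neg (show ¬(1 ≤ n ∧ n < N + 1) by omega)]
  have expand : ∑ k ∈ Finset.Ico 1 (N+1), PowerSeries.C (R := ℤ) (e k : ℤ) * PowerSeries.X ^ k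
      = (∑ k ∈ Finset.Ico 1 N, PowerSeries.C (R := ℤ) (e k : ℤ) * PowerSeries.X ^ k)
        + PowerSeries.C (R := ℤ) (e N : ℤ) * PowerSeries.X ^ N := by
    rw [Finset.sum_Ico_succ_top (by omega)]
  have hCadd : PowerSeries.C (R := ℤ) (1 + (e N : ℤ)) = 1 + PowerSeries.C (R := ℤ) (e N : ℤ) := by
    rw [map_add, map_one]
  unfold Gser
  rw [hCadd]
  have := key
  rw [expand] at this
  linear_combination -this

lemma lemma3 (hN : 2 ≤ N) (c : ℕ → ℕ) (hc0 : c 0 = 1)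
    (hrec : ∀ n, c (n+1) = ∑ j ∈ Finset.range (n+1), blkE N e (j+1) * c (n - j)) :
    Pser c * Gser N e = 1 - PowerSeries.X ^ N := by
  have h2 : Pser c * Gser N e = (Pser c * (1 - Qser N e)) * (1 - PowerSeries.X ^ N) := by
    rw [← lemma2 N e hN]
    ring
  rw [h2, lemma1 N e c hc0 hrec, one_mul]

lemma blkE_le (hN : 2 ≤ N) (m : ℕ) : blkE N e m ≤ ∑ k ∈ Finset.Icc 1 N, e k := by
  unfold blkE
  refine Finset.single_le_sum (f := e) (fun i _ => Nat.zero_le _) ?_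
  rw [Finset.mem_Icc]
  have := Nat.mod_lt (m - 1) (show 0 < N by omega)
  omega

lemma geom_aux (B : ℕ) : ∀ s : ℕ, ∑ i ∈ Finset.range s, B * (B+1)^i = (B+1)^s - 1 := by
  intro s
  induction s with
  | zero => simp
  | succ s ih =>
    rw [Finset.sum_range_succ, ih, pow_succ]
    have h1 : 0 < (B+1)^s := Nat.pow_pos (by omega)
    have h2 : (B+1)^s * (B+1) = B * (B+1)^s + (B+1)^s := by ring
    omega

lemma cbound (hN : 2 ≤ N) (c : ℕ → ℕ) (hc0 : c 0 = 1)
    (hrec : ∀ n, c (n+1) = ∑ j ∈ Finset.range (n+1), blkE N e (j+1) * c (n - j)) :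
    ∀ n, c n ≤ (∑ k ∈ Finset.Icc 1 N, e k + 1) ^ n := by
  set B := ∑ k ∈ Finset.Icc 1 N, e k with hB
  intro n
  induction n using Nat.strong_induction_on with
  | _ n IH =>
    cases n with
    | zero => simp [hc0]
    | succ n =>
      rw [hrec n]
      calc ∑ j ∈ Finset.range (n+1), blkE N e (j+1) * c (n - j)
          ≤ ∑ j ∈ Finset.range (n+1), B * (B+1)^(n-j) := by
            refine Finset.sum_le_sum fun j hj => ?_
            rw [Finset.mem_range] at hj
            exact Nat.mul_le_mul (blkE_le N e hN (j+1)) (IH (n-j) (by omega))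
        _ = ∑ i ∈ Finset.range (n+1), B * (B+1)^i := by
            rw [← Finset.sum_range_reflect (fun i => B * (B+1)^i) (n+1)]
            simp
        _ = (B+1)^(n+1) - 1 := geom_aux B (n+1)
        _ ≤ (B+1)^(n+1) := Nat.sub_le _ _

lemma coeffG (hN : 2 ≤ N) (n : ℕ) :
    PowerSeries.coeff (R := ℤ) n (Gser N e)
      = (if n = 0 then 1 else 0) - (if n ∈ Finset.Ico 1 N then (e n : ℤ) else 0)
        - (if n = N then 1 + (e N : ℤ) else 0) := by
  unfold Gser
  rw [map_sub, map_sub, PowerSeries.coeff_one]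
  congr 1
  congr 1
  · rw [map_sum, ← Finset.sum_ite_eq (Finset.Ico 1 N) n (fun k => (e k : ℤ))]
    refine Finset.sum_congr rfl fun k _ => ?_
    rw [PowerSeries.coeff_C_mul, PowerSeries.coeff_X_pow]
    split_ifs with h
    · rw [mul_one]
    · rw [mul_zero]
  · rw [PowerSeries.coeff_C_mul, PowerSeries.coeff_X_pow]
    split_ifs with h
    · rw [mul_one]
    · rw [mul_zero]

noncomputable def Fden (x : ℝ) : ℝ :=
  1 - (∑ k ∈ Finset.Ico 1 N, (e k : ℝ) * x ^ k) - (1 + (e N : ℝ)) * x ^ N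

lemma Fden_cont : Continuous (Fden N e) := by
  unfold Fden
  apply Continuous.sub
  apply Continuous.sub
  · exact continuous_const
  · exact continuous_finset_sum _ fun k _ => (continuous_const.mul (continuous_pow k))
  · exact continuous_const.mul (continuous_pow N)

lemma Fden_zero (hN : 2 ≤ N) : Fden N e 0 = 1 := by
  unfold Fden
  rw [Finset.sum_eq_zero, zero_pow (by omega : N ≠ 0)]
  · ring
  · intro k hk
    rw [Finset.mem_Ico] at hk
    rw [zero_pow (by omega : k ≠ 0), mul_zero]

lemma lemma4 (hN : 2 ≤ N) (c : ℕ → ℕ) (hc0 : c 0 = 1)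
    (hrec : ∀ n, c (n+1) = ∑ j ∈ Finset.range (n+1), blkE N e (j+1) * c (n - j)) :
    ∃ r : ℝ, 0 < r ∧ ∀ x : ℝ, |x| < r →
      HasSum (fun n : ℕ => (c n : ℝ) * x ^ n) ((1 - x ^ N) / Fden N e x) := by
  classical
  set B := ∑ k ∈ Finset.Icc 1 N, e k with hB
  have hcontat := (Fden_cont N e).continuousAt (x := 0)
  rw [Metric.continuousAt_iff] at hcontat
  obtain ⟨δ, hδ, hdist⟩ := hcontat (1/2) (by norm_num)
  refine ⟨min δ (1 / (B + 2)), lt_min hδ (by positivity), fun x hx => ?_⟩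
  have hxδ : |x| < δ := lt_of_lt_of_le hx (min_le_left _ _)
  have hxB : |x| < 1 / (B + 2) := lt_of_lt_of_le hx (min_le_right _ _)
  have hFx : Fden N e x ≠ 0 := by
    have := hdist (x := x) (by rwa [Real.dist_eq, sub_zero])
    rw [Real.dist_eq, Fden_zero N e hN] at this
    have := abs_sub_lt_iff.mp this
    intro h
    rw [h] at this
    norm_num at this
  have hq : ((B : ℝ) + 1) * |x| < 1 := by
    have hB2 : (0:ℝ) < (B:ℝ) + 2 := by positivity
    rw [div_eq_inv_mul, mul_one] at hxB
    calc ((B:ℝ) + 1) * |x| < ((B:ℝ) + 1) * ((B:ℝ) + 2)⁻¹ := by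
          apply mul_lt_mul_of_pos_left hxB (by positivity)
      _ < 1 := by
          rw [mul_inv_lt_iff₀ hB2, one_mul]
          linarith
  have hle : ∀ n : ℕ, ‖(c n : ℝ) * x ^ n‖ ≤ (((B:ℝ)+1) * |x|) ^ n := by
    intro n
    rw [norm_mul, norm_pow, Real.norm_eq_abs, Real.norm_eq_abs, Nat.abs_cast, mul_pow]
    apply mul_le_mul_of_nonneg_right _ (pow_nonneg (abs_nonneg x) n)
    calc (c n : ℝ) ≤ ((B+1 : ℕ) : ℝ) ^ n := by
          rw [← Nat.cast_pow]
          exact_mod_cast cbound N e hN c hc0 hrec n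
      _ = ((B:ℝ)+1) ^ n := by push_cast; ring_nf
  have hanorm : Summable (fun n : ℕ => ‖(c n : ℝ) * x ^ n‖) :=
    Summable.of_nonneg_of_le (fun n => norm_nonneg _) hle
      (summable_geometric_of_lt_one (by positivity) hq)
  have ha : Summable (fun n : ℕ => (c n : ℝ) * x ^ n) := hanorm.of_norm
  -- the polynomial series
  set b : ℕ → ℝ := fun n => ((PowerSeries.coeff (R := ℤ) n (Gser N e) : ℤ) : ℝ) * x ^ n with hb
  have hbzero : ∀ n ∉ Finset.range (N+1), b n = 0 := by
    intro n hn
    rw [Finset.mem_range] at hn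
    simp only [hb, coeffG N e hN n]
    rw [if_neg (by omega), if_neg (by simp [Finset.mem_Ico]; omega), if_neg (by omega)]
    simp
  have hbnorm : Summable (fun n : ℕ => ‖b n‖) := by
    apply summable_of_ne_finset_zero (s := Finset.range (N+1))
    intro n hn
    rw [hbzero n hn, norm_zero]
  have hbsum : Summable b := hbnorm.of_norm
  have htsumb : ∑' n, b n = Fden N e x := by
    rw [tsum_eq_sum hbzero]
    unfold Fden
    simp only [hb, coeffG N e hN]
    have hterm : ∀ n ∈ Finset.range (N+1),
        (((if n = 0 then 1 else 0) - (if n ∈ Finset.Ico 1 N then (e n : ℤ) else 0)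
          - (if n = N then 1 + (e N : ℤ) else 0) : ℤ) : ℝ) * x ^ n
        = (if n = 0 then x ^ n else 0) - (if n ∈ Finset.Ico 1 N then (e n : ℝ) * x ^ n else 0)
          - (if n = N then (1 + (e N : ℝ)) * x ^ n else 0) := by
      intro n _
      split_ifs <;> push_cast <;> ring
    rw [Finset.sum_congr rfl hterm, Finset.sum_sub_distrib, Finset.sum_sub_distrib,
      Finset.sum_ite_eq' (Finset.range (N+1)) 0 (fun n => x ^ n),
      Finset.sum_ite_eq' (Finset.range (N+1)) N (fun n => (1 + (e N : ℝ)) * x ^ n),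
      Finset.sum_ite_mem, Finset.inter_eq_right.mpr (by
        intro k hk
        rw [Finset.mem_Ico] at hk
        rw [Finset.mem_range]
        omega),
      if_pos (by rw [Finset.mem_range]; omega), if_pos (by rw [Finset.mem_range]; omega),
      pow_zero]
  -- Cauchy product
  have hPG := lemma3 N e hN c hc0 hrec
  have hcoeffPG : ∀ n : ℕ, ∑ p ∈ Finset.HasAntidiagonal.antidiagonal n,
      (c p.1 : ℤ) * PowerSeries.coeff (R := ℤ) p.2 (Gser N e)
        = PowerSeries.coeff (R := ℤ) n (1 - PowerSeries.X ^ N) := by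
    intro n
    rw [← hPG, PowerSeries.coeff_mul]
    exact Finset.sum_congr rfl fun p _ => by rw [Pser, PowerSeries.coeff_mk]
  have hcauchy := tsum_mul_tsum_eq_tsum_sum_antidiagonal_of_summable_norm hanorm hbnorm
  have hinner : ∀ n : ℕ, (∑ p ∈ Finset.HasAntidiagonal.antidiagonal n,
      ((c p.1 : ℝ) * x ^ p.1) * b p.2)
        = ((PowerSeries.coeff (R := ℤ) n (1 - PowerSeries.X ^ N) : ℤ) : ℝ) * x ^ n := by
    intro n
    rw [← hcoeffPG n]
    push_cast
    rw [Finset.sum_mul]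
    refine Finset.sum_congr rfl fun p hp => ?_
    rw [Finset.HasAntidiagonal.mem_antidiagonal] at hp
    simp only [hb]
    rw [← hp, pow_add]
    ring
  have hd : ∀ n ∉ Finset.range (N+1),
      ((PowerSeries.coeff (R := ℤ) n (1 - PowerSeries.X ^ N) : ℤ) : ℝ) * x ^ n = 0 := by
    intro n hn
    rw [Finset.mem_range] at hn
    rw [map_sub, PowerSeries.coeff_one, PowerSeries.coeff_X_pow,
      if_neg (by omega), if_neg (by omega)]
    simp
  have htsumd : ∑' n : ℕ, ((PowerSeries.coeff (R := ℤ) n (1 - PowerSeries.X ^ N) : ℤ) : ℝ) * x ^ n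
      = 1 - x ^ N := by
    rw [tsum_eq_sum hd]
    have hterm : ∀ n ∈ Finset.range (N+1),
        ((PowerSeries.coeff (R := ℤ) n (1 - PowerSeries.X ^ N) : ℤ) : ℝ) * x ^ n
        = (if n = 0 then x ^ n else 0) - (if n = N then x ^ n else 0) := by
      intro n _
      rw [map_sub, PowerSeries.coeff_one, PowerSeries.coeff_X_pow]
      split_ifs <;> push_cast <;> ring
    rw [Finset.sum_congr rfl hterm, Finset.sum_sub_distrib,
      Finset.sum_ite_eq' (Finset.range (N+1)) 0 (fun n => x ^ n),
      Finset.sum_ite_eq' (Finset.range (N+1)) N (fun n => x ^ n),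
      if_pos (by rw [Finset.mem_range]; omega), if_pos (by rw [Finset.mem_range]; omega),
      pow_zero]
  have hmul : (∑' n : ℕ, (c n : ℝ) * x ^ n) * Fden N e x = 1 - x ^ N := by
    rw [← htsumb, hcauchy, ← htsumd]
    exact tsum_congr hinner
  have hval : (∑' n : ℕ, (c n : ℝ) * x ^ n) = (1 - x ^ N) / Fden N e x := by
    rw [eq_div_iff hFx, hmul]
  exact hval ▸ ha.hasSum

end ZeckAux

/-- Generating function of the numbers `C_n`:
`(Σ C_n X^n)·(1 − Σ_{k=1}^{N−1} e_k X^k − (1+e_N) X^N) = 1 − X^N` as formal power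
series over `ℤ`; equivalently `Σ C_n x^n` converges near `0` to `(1 − x^N)/f(x)`. -/
theorem generating_function_of_decomposition_counts (N : ℕ) (e : ℕ → ℕ)
    (hN : 2 ≤ N) (he : 1 ≤ e 1)
    (C : ℕ → ℕ) (hC0 : C 0 = 1)
    (hC : ∀ n, 1 ≤ n → C n = Set.ncard (Zeck.decompTuples N e n)) :
    ((PowerSeries.mk fun n => (C n : ℤ)) *
      (1 - (∑ k ∈ Finset.Ico 1 N, PowerSeries.C (R := ℤ) (e k : ℤ) * PowerSeries.X ^ k)
         - PowerSeries.C (R := ℤ) (1 + (e N : ℤ)) * PowerSeries.X ^ N)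
      = 1 - PowerSeries.X ^ N) ∧
    ∃ r : ℝ, 0 < r ∧ ∀ x : ℝ, |x| < r →
      HasSum (fun n : ℕ => (C n : ℝ) * x ^ n)
        ((1 - x ^ N) /
          (1 - (∑ k ∈ Finset.Ico 1 N, (e k : ℝ) * x ^ k) - (1 + (e N : ℝ)) * x ^ N)) := by
    classical
  have hTuples : ∀ n : ℕ, 1 ≤ n → Zeck.decompTuples N e n = ZeckAux.Tuples N e 1 n := by
    intro n _
    rfl
  have hcg : ∀ n, C n = ZeckAux.gcount N e n := by
    intro n
    cases n with
    | zero => rw [hC0, ZeckAux.gcount_zero]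
    | succ n =>
      rw [hC (n+1) (by omega), hTuples (n+1) (by omega),
        (ZeckAux.tuples_finite_card N e n 1 (n+1) le_rfl (by omega)).2]
  have hrec : ∀ n, C (n+1) = ∑ j ∈ Finset.range (n+1), ZeckAux.blkE N e (j+1) * C (n - j) := by
    intro n
    rw [hcg, ZeckAux.gcount_succ]
    exact Finset.sum_congr rfl fun j _ => by rw [hcg]
  constructor
  · exact ZeckAux.lemma3 N e hN C hC0 hrec
  · exact ZeckAux.lemma4 N e hN C hC0 hrec
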